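/- Under the LOLOHA generative model — V finite of size k, g ≥ 2, 0 < ε₁ < ε∞, ε_IRR = ln((e^{ε∞+ε₁}−1)/(e^{ε∞}−e^{ε₁})), p₁ = e^{ε∞}/(e^{ε∞}+g−1), q₁' = 1/g, p₂ = e^{ε_IRR}/(e^{ε_IRR}+g−1), q₂ = 1/(e^{ε_IRR}+g−1); n independent users, user u holding v_u ∈ V, sampling H_u uniformly from a pairwise-independent family ℋ of hash functions V → {1,…,g} and reporting x''_u = GRR(GRR(H_u(v_u); ε∞); ε_IRR) — the estimator f̂(v) = (C(v) − n·q₁'·(p₂−q₂) − n·q₂)/(n·(p₁−q₁')·(p₂−q₂)), with C(v) = |{u : H_u(v) = x''_u}|, satisfies Var[f̂(v)] ≤ 1/(4·n·(p₁−q₁')²·(p₂−q₂)²) for every v ∈ V. -/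

import Mathlib

open Finset


lemma sum_pi_prod {n : ℕ} {S : Type} [Fintype S] (g : Fin n → S → ℝ) :
    ∑ ω : Fin n → S, ∏ t, g t (ω t) = ∏ t, ∑ s, g t s := by
  rw [Finset.prod_univ_sum]; simp

lemma exp_one {n : ℕ} {S : Type} [Fintype S] (w : Fin n → S → ℝ)
    (hw1 : ∀ u, ∑ s, w u s = 1) (u : Fin n) (c : S → ℝ) :
    ∑ ω : Fin n → S, (∏ t, w t (ω t)) * c (ω u) = ∑ s, w u s * c s := by
  have h : ∀ ω : Fin n → S, (∏ t, w t (ω t)) * c (ω u)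
      = ∏ t, (w t (ω t) * if t = u then c (ω t) else 1) := by
    intro ω
    rw [Finset.prod_mul_distrib, Finset.prod_ite_eq' Finset.univ u (fun t => c (ω t))]
    simp
  rw [Finset.sum_congr rfl fun ω _ => h ω, sum_pi_prod (fun t s => w t s * if t = u then c s else 1)]
  rw [Finset.prod_eq_single u (fun t _ ht => by simp [ht, hw1 t]) (by simp)]
  simp

lemma exp_two {n : ℕ} {S : Type} [Fintype S] (w : Fin n → S → ℝ)
    (hw1 : ∀ u, ∑ s, w u s = 1) (u u' : Fin n) (huu : u ≠ u') (c d : S → ℝ) :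
    ∑ ω : Fin n → S, (∏ t, w t (ω t)) * c (ω u) * d (ω u')
      = (∑ s, w u s * c s) * (∑ s, w u' s * d s) := by
  have h : ∀ ω : Fin n → S, (∏ t, w t (ω t)) * c (ω u) * d (ω u')
      = ∏ t, (w t (ω t) * ((if t = u then c (ω t) else 1) * (if t = u' then d (ω t) else 1))) := by
    intro ω
    rw [Finset.prod_mul_distrib, Finset.prod_mul_distrib,
      Finset.prod_ite_eq' Finset.univ u (fun t => c (ω t)),
      Finset.prod_ite_eq' Finset.univ u' (fun t => d (ω t))]
    simp; ring
  rw [Finset.sum_congr rfl fun ω _ => h ω, sum_pi_prod (fun t s => w t s * ((if t = u then c s else 1) * (if t = u' then d s else 1)))]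
  rw [Finset.prod_eq_mul_of_mem u u' (Finset.mem_univ u) (Finset.mem_univ u') huu
    (fun t _ ht => by simp [ht.1, ht.2, hw1 t])]
  simp [huu, Ne.symm huu, mul_comm]

lemma var_sum_indicator {n : ℕ} {S : Type} [Fintype S] (w : Fin n → S → ℝ)
    (hw1 : ∀ u, ∑ s, w u s = 1) (X : Fin n → S → ℝ)
    (hX : ∀ u s, X u s = 0 ∨ X u s = 1) :
    ∑ ω : Fin n → S, (∏ t, w t (ω t)) *
      ((∑ u, X u (ω u)) - ∑ u, ∑ s, w u s * X u s) ^ 2 ≤ n / 4 := by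
  set m : Fin n → ℝ := fun u => ∑ s, w u s * X u s with hm
  have key : ∑ ω : Fin n → S, (∏ t, w t (ω t)) *
      ((∑ u, X u (ω u)) - ∑ u, m u) ^ 2
      = ∑ u, (m u - (m u) ^ 2) := by
    have expand : ∀ ω : Fin n → S,
        (∏ t, w t (ω t)) * ((∑ u, X u (ω u)) - ∑ u, m u) ^ 2
        = ∑ u, ∑ u', (∏ t, w t (ω t)) * ((X u (ω u) - m u) * (X u' (ω u') - m u')) := by
      intro ω
      rw [← Finset.sum_sub_distrib, sq, Finset.sum_mul_sum]
      simp only [Finset.mul_sum]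
    rw [Finset.sum_congr rfl fun ω _ => expand ω]
    rw [Finset.sum_comm]
    have swap2 : ∀ u : Fin n, ∑ ω : Fin n → S, ∑ u',
          (∏ t, w t (ω t)) * ((X u (ω u) - m u) * (X u' (ω u') - m u'))
        = ∑ u', ∑ ω : Fin n → S,
          (∏ t, w t (ω t)) * ((X u (ω u) - m u) * (X u' (ω u') - m u')) :=
      fun u => Finset.sum_comm
    rw [Finset.sum_congr rfl fun u _ => swap2 u]
    refine Finset.sum_congr rfl fun u _ => ?_
    have hzero : ∀ u' : Fin n, ∑ s, w u' s * (X u' s - m u') = 0 := by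
      intro u'
      simp only [mul_sub]
      rw [Finset.sum_sub_distrib, ← Finset.sum_mul, hw1 u']
      simp [hm]
    have diag : ∑ ω : Fin n → S,
        (∏ t, w t (ω t)) * ((X u (ω u) - m u) * (X u (ω u) - m u))
        = m u - (m u) ^ 2 := by
      rw [exp_one w hw1 u (fun s => (X u s - m u) * (X u s - m u))]
      have : ∀ s, w u s * ((X u s - m u) * (X u s - m u))
          = (w u s * X u s) * X u s - 2 * m u * (w u s * X u s) + (m u)^2 * w u s := by
        intro s; ring
      rw [Finset.sum_congr rfl fun s _ => this s]
      have hXX : ∀ s, (w u s * X u s) * X u s = w u s * X u s := by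
        intro s; rcases hX u s with h | h <;> simp [h]
      rw [Finset.sum_add_distrib, Finset.sum_sub_distrib,
        Finset.sum_congr rfl fun s _ => hXX s, ← Finset.mul_sum, ← Finset.mul_sum,
        hw1 u]
      have hmu : ∑ s, w u s * X u s = m u := rfl
      rw [hmu]; ring
    rw [Finset.sum_eq_single u]
    · exact diag
    · intro u' _ huu'
      have := exp_two w hw1 u u' (Ne.symm huu') (fun s => X u s - m u) (fun s => X u' s - m u')
      rw [Finset.sum_congr rfl fun ω _ => (mul_assoc _ _ _).symm, this, hzero u, hzero u']
      ring
    · simp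
  rw [key]
  have : ∀ u : Fin n, m u - (m u) ^ 2 ≤ 1 / 4 := by
    intro u; nlinarith [sq_nonneg (m u - 1/2)]
  calc ∑ u, (m u - (m u) ^ 2) ≤ ∑ u : Fin n, (1:ℝ)/4 := Finset.sum_le_sum fun u _ => this u
    _ = n / 4 := by simp [Finset.sum_const]; ring
noncomputable section

/-- One user's sample point in the LOLOHA generative model: the hash function,
the memoized PRR output, and the reported IRR output. -/
abbrev LolohaSample (V : Type) (g : ℕ) : Type := (V → Fin g) × Fin g × Fin g

/-- Probability weight of a joint outcome `ω` of `n` independent users, where user `u`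
holds `vu u`, samples `H_u` uniformly from `ℋ`, memoizes `z_u = GRR(H_u(v_u); ε∞)`
(keep-probability `p₁`, switch-probability `q₁`) and reports
`x''_u = GRR(z_u; ε_IRR)` (probabilities `p₂`, `q₂`). -/
def lolohaWeight (V : Type) [Fintype V] [DecidableEq V] (g n : ℕ)
    (ℋ : Finset (V → Fin g)) (p₁ q₁ p₂ q₂ : ℝ)
    (vu : Fin n → V) (ω : Fin n → LolohaSample V g) : ℝ :=
  ∏ u : Fin n,
    ((if (ω u).1 ∈ ℋ then (1 : ℝ) / ℋ.card else 0) *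
     (if (ω u).2.1 = (ω u).1 (vu u) then p₁ else q₁) *
     (if (ω u).2.2 = (ω u).2.1 then p₂ else q₂))

/-- The server-side support count `C(v) = |{u : H_u(v) = x''_u}|`. -/
def lolohaCount (V : Type) [Fintype V] [DecidableEq V] (g n : ℕ)
    (v : V) (ω : Fin n → LolohaSample V g) : ℕ :=
  (Finset.univ.filter fun u : Fin n => (ω u).1 v = (ω u).2.2).card

/-- The LOLOHA frequency estimator
`f̂(v) = (C(v) − n·q₁'·(p₂−q₂) − n·q₂) / (n·(p₁−q₁')·(p₂−q₂))`. -/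
def lolohaEst (V : Type) [Fintype V] [DecidableEq V] (g n : ℕ)
    (p₁ q₁' p₂ q₂ : ℝ) (v : V) (ω : Fin n → LolohaSample V g) : ℝ :=
  ((lolohaCount V g n v ω : ℝ) - n * q₁' * (p₂ - q₂) - n * q₂) /
    (n * (p₁ - q₁') * (p₂ - q₂))

/-- The true frequency `f(v) = |{u : v_u = v}| / n`. -/
def lolohaTrueFreq (V : Type) [DecidableEq V] (n : ℕ) (vu : Fin n → V) (v : V) : ℝ :=
  ((Finset.univ.filter fun u : Fin n => vu u = v).card : ℝ) / n

end

/-- **Variance bound of the LOLOHA estimator** under the LOLOHA generative model: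
`Var[f̂(v)] ≤ 1/(4·n·(p₁−q₁')²·(p₂−q₂)²)` for every `v`. -/
theorem loloha_estimator_variance_le
    (V : Type) [Fintype V] [DecidableEq V] (k g n : ℕ)
    (hk : Fintype.card V = k) (hg : 2 ≤ g) (hn : 1 ≤ n)
    (ε₁ εinf : ℝ) (h₁ : 0 < ε₁) (h₂ : ε₁ < εinf)
    (εIRR : ℝ)
    (hεIRR : εIRR = Real.log ((Real.exp (εinf + ε₁) - 1) / (Real.exp εinf - Real.exp ε₁)))
    (p₁ q₁ q₁' p₂ q₂ : ℝ)
    (hp₁ : p₁ = Real.exp εinf / (Real.exp εinf + g - 1))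
    (hq₁ : q₁ = 1 / (Real.exp εinf + g - 1))
    (hq₁' : q₁' = 1 / (g : ℝ))
    (hp₂ : p₂ = Real.exp εIRR / (Real.exp εIRR + g - 1))
    (hq₂ : q₂ = 1 / (Real.exp εIRR + g - 1))
    (ℋ : Finset (V → Fin g)) (hne : ℋ.Nonempty)
    (hpi : ∀ v w : V, v ≠ w → ∀ a b : Fin g,
      (ℋ.filter fun H => H v = a ∧ H w = b).card * g ^ 2 = ℋ.card)
    (vu : Fin n → V)
    (v : V) :
    ∑ ω : Fin n → LolohaSample V g,
        lolohaWeight V g n ℋ p₁ q₁ p₂ q₂ vu ω *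
          (lolohaEst V g n p₁ q₁' p₂ q₂ v ω -
            ∑ ω' : Fin n → LolohaSample V g,
              lolohaWeight V g n ℋ p₁ q₁ p₂ q₂ vu ω' *
                lolohaEst V g n p₁ q₁' p₂ q₂ v ω') ^ 2 ≤
      1 / (4 * n * (p₁ - q₁') ^ 2 * (p₂ - q₂) ^ 2) := by
  classical
  set w : Fin n → LolohaSample V g → ℝ := fun u s =>
    (if s.1 ∈ ℋ then (1:ℝ)/ℋ.card else 0) *
    (if s.2.1 = s.1 (vu u) then p₁ else q₁) *
    (if s.2.2 = s.2.1 then p₂ else q₂) with hwdef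
  set X : Fin n → LolohaSample V g → ℝ := fun _ s => if s.1 v = s.2.2 then 1 else 0 with hXdef
  have hWeq : ∀ ω, lolohaWeight V g n ℋ p₁ q₁ p₂ q₂ vu ω = ∏ t, w t (ω t) := fun ω => rfl
  have hX' : ∀ u s, X u s = 0 ∨ X u s = 1 := by
    intro u s; simp only [hXdef]; split <;> simp
  have hg2 : (2:ℝ) ≤ (g:ℝ) := by exact_mod_cast hg
  have hn0 : (n:ℝ) ≠ 0 := by
    have : (0:ℕ) < n := hn
    positivity
  have hD1 : Real.exp εinf + (g:ℝ) - 1 ≠ 0 := by nlinarith [Real.exp_pos εinf]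
  have hD2 : Real.exp εIRR + (g:ℝ) - 1 ≠ 0 := by nlinarith [Real.exp_pos εIRR]
  have hsum1 : p₁ + ((g:ℝ)-1) * q₁ = 1 := by
    rw [hp₁, hq₁]; field_simp; ring
  have hsum2 : p₂ + ((g:ℝ)-1) * q₂ = 1 := by
    rw [hp₂, hq₂]; field_simp; ring
  have hx2 : ∀ z : Fin g, ∑ x : Fin g, (if x = z then p₂ else q₂) = 1 := by
    intro z
    have h : ∀ x : Fin g, (if x = z then p₂ else q₂) = (if x = z then p₂ - q₂ else 0) + q₂ := by
      intro x; split <;> ring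
    rw [Finset.sum_congr rfl fun x _ => h x, Finset.sum_add_distrib,
      Finset.sum_ite_eq' Finset.univ z (fun _ => p₂ - q₂)]
    simp only [Finset.mem_univ, if_true, Finset.sum_const, Finset.card_univ,
      Fintype.card_fin, nsmul_eq_mul]
    linarith [hsum2]
  have hx1 : ∀ z : Fin g, ∑ x : Fin g, (if x = z then p₁ else q₁) = 1 := by
    intro z
    have h : ∀ x : Fin g, (if x = z then p₁ else q₁) = (if x = z then p₁ - q₁ else 0) + q₁ := by
      intro x; split <;> ring
    rw [Finset.sum_congr rfl fun x _ => h x, Finset.sum_add_distrib,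
      Finset.sum_ite_eq' Finset.univ z (fun _ => p₁ - q₁)]
    simp only [Finset.mem_univ, if_true, Finset.sum_const, Finset.card_univ,
      Fintype.card_fin, nsmul_eq_mul]
    linarith [hsum1]
  have hw1 : ∀ u, ∑ s : LolohaSample V g, w u s = 1 := by
    intro u
    rw [Fintype.sum_prod_type]
    have inner : ∀ H : V → Fin g,
        ∑ zx : Fin g × Fin g, w u (H, zx) = if H ∈ ℋ then (1:ℝ)/ℋ.card else 0 := by
      intro H
      rw [Fintype.sum_prod_type]
      have hz : ∀ z : Fin g, ∑ x : Fin g, w u (H, (z, x))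
          = (if H ∈ ℋ then (1:ℝ)/ℋ.card else 0) * (if z = H (vu u) then p₁ else q₁) := by
        intro z
        have h0 : ∑ x : Fin g, w u (H, (z, x))
            = ((if H ∈ ℋ then (1:ℝ)/ℋ.card else 0) * (if z = H (vu u) then p₁ else q₁)) *
              ∑ x : Fin g, (if x = z then p₂ else q₂) := by
          rw [Finset.mul_sum]
        rw [h0, hx2 z, mul_one]
      rw [Finset.sum_congr rfl fun z _ => hz z]
      have h1 : ∑ z : Fin g, ((if H ∈ ℋ then (1:ℝ)/ℋ.card else 0) * (if z = H (vu u) then p₁ else q₁))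
          = (if H ∈ ℋ then (1:ℝ)/ℋ.card else 0) * ∑ z : Fin g, (if z = H (vu u) then p₁ else q₁) := by
        rw [Finset.mul_sum]
      rw [h1, hx1 (H (vu u)), mul_one]
    rw [Finset.sum_congr rfl fun H _ => inner H, Finset.sum_ite_mem, Finset.univ_inter,
      Finset.sum_const, nsmul_eq_mul]
    have hc0 : (ℋ.card : ℝ) ≠ 0 := by
      exact_mod_cast Finset.card_ne_zero_of_mem hne.choose_spec
    field_simp
  have hC : ∀ ω : Fin n → LolohaSample V g,
      (lolohaCount V g n v ω : ℝ) = ∑ u, X u (ω u) := by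
    intro ω
    rw [lolohaCount, Finset.card_filter]
    push_cast
    exact Finset.sum_congr rfl fun u _ => by simp [hXdef]
  set M : ℝ := ∑ u : Fin n, ∑ s : LolohaSample V g, w u s * X u s with hM
  have hW1 : ∑ ω : Fin n → LolohaSample V g, ∏ t, w t (ω t) = 1 := by
    rw [sum_pi_prod w, Finset.prod_congr rfl fun t _ => hw1 t]
    simp
  have hEC : ∑ ω : Fin n → LolohaSample V g, (∏ t, w t (ω t)) * ∑ u, X u (ω u) = M := by
    simp only [Finset.mul_sum]
    rw [Finset.sum_comm]
    exact Finset.sum_congr rfl fun u _ => exp_one w hw1 u (X u)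
  set c : ℝ := (n:ℝ) * q₁' * (p₂ - q₂) + n * q₂ with hc
  set d : ℝ := (n:ℝ) * (p₁ - q₁') * (p₂ - q₂) with hd
  have hest : ∀ ω, lolohaEst V g n p₁ q₁' p₂ q₂ v ω = ((∑ u, X u (ω u)) - c) / d := by
    intro ω
    rw [lolohaEst, hC ω, hc, hd, sub_sub]
  have hEest : ∑ ω' : Fin n → LolohaSample V g,
      lolohaWeight V g n ℋ p₁ q₁ p₂ q₂ vu ω' * lolohaEst V g n p₁ q₁' p₂ q₂ v ω'
      = (M - c) / d := by
    simp only [hWeq, hest, div_eq_mul_inv]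
    rw [Finset.sum_congr rfl fun ω _ => (mul_assoc _ _ _).symm, ← Finset.sum_mul]
    congr 1
    simp only [mul_sub]
    rw [Finset.sum_sub_distrib, hEC, ← Finset.sum_mul, hW1, one_mul]
  have hdev : ∀ ω, lolohaEst V g n p₁ q₁' p₂ q₂ v ω -
      (∑ ω' : Fin n → LolohaSample V g,
        lolohaWeight V g n ℋ p₁ q₁ p₂ q₂ vu ω' * lolohaEst V g n p₁ q₁' p₂ q₂ v ω')
      = ((∑ u, X u (ω u)) - M) / d := by
    intro ω
    rw [hest ω, hEest, div_sub_div_same]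
    congr 1; ring
  calc ∑ ω : Fin n → LolohaSample V g,
        lolohaWeight V g n ℋ p₁ q₁ p₂ q₂ vu ω *
          (lolohaEst V g n p₁ q₁' p₂ q₂ v ω -
            ∑ ω' : Fin n → LolohaSample V g,
              lolohaWeight V g n ℋ p₁ q₁ p₂ q₂ vu ω' *
                lolohaEst V g n p₁ q₁' p₂ q₂ v ω') ^ 2
      = (∑ ω : Fin n → LolohaSample V g,
          (∏ t, w t (ω t)) * ((∑ u, X u (ω u)) - M) ^ 2) * ((d ^ 2)⁻¹) := by
        rw [Finset.sum_mul]
        refine Finset.sum_congr rfl fun ω _ => ?_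
        rw [hWeq, hdev ω, div_pow, div_eq_mul_inv, ← mul_assoc]
    _ ≤ ((n:ℝ) / 4) * ((d ^ 2)⁻¹) := by
        refine mul_le_mul_of_nonneg_right ?_ (inv_nonneg.mpr (sq_nonneg d))
        exact var_sum_indicator w hw1 X hX'
    _ ≤ 1 / (4 * n * (p₁ - q₁') ^ 2 * (p₂ - q₂) ^ 2) := by
        have hd2 : d ^ 2 = (n:ℝ)^2 * ((p₁ - q₁')^2 * (p₂ - q₂)^2) := by rw [hd]; ring
        rcases eq_or_ne ((p₁ - q₁')^2 * (p₂ - q₂)^2) 0 with hB | hB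
        · rw [hd2, hB, mul_zero, inv_zero, mul_zero]
          rcases mul_eq_zero.mp hB with h | h <;> simp [h]
        · rw [hd2]
          have heq : ((n:ℝ)/4) * ((n:ℝ)^2 * ((p₁-q₁')^2*(p₂-q₂)^2))⁻¹
              = 1/(4*(n:ℝ)*(p₁-q₁')^2*(p₂-q₂)^2) := by
            have h1 : (p₁-q₁')^2 ≠ 0 := fun h => hB (by rw [h, zero_mul])
            have h2 : (p₂-q₂)^2 ≠ 0 := fun h => hB (by rw [h, mul_zero])
            field_simp
          rw [heq]
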